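/- Let \phi(x_1,x_2,x_3) = \frac{(1-x_3)(1-x_1-x_3)(1-x_2-x_3)(1-x_1-x_2-x_3)}{-\,x_1 x_2 x_3}, a Laurent polynomial in three variables. Then for every k \ge 0, the constant term of \phi^k (the coefficient of x_1^0 x_2^0 x_3^0 in the Laurent expansion of \phi(x)^k) equals \sum_{i=0}^{k} \sum_{j=0}^{k-i} \frac{k!\,(2k)!}{(i!)^2 (j!)^2 (k-i)!\,(k-j)!\,(k-i-j)!}. In particular these constant terms are 1, 6, 114, \ldots for k = 0, 1, 2. -/

import Mathlib

/-- The `i`-th coordinate variable `xᵢ`, as an element of the ring of Laurent polynomials in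
three variables (the group algebra of `ℤ³` over `ℂ`). -/
noncomputable def X3 (i : Fin 3) : AddMonoidAlgebra ℂ (Fin 3 → ℤ) :=
  AddMonoidAlgebra.single (Pi.single i 1) 1

/-- The Minkowski Laurent polynomial
`φ = (1-x₃)(1-x₁-x₃)(1-x₂-x₃)(1-x₁-x₂-x₃) / (-x₁x₂x₃)`
of the Landau–Ginzburg model mirror to the Fano threefold `V₁₀`. -/
noncomputable def phiV10 : AddMonoidAlgebra ℂ (Fin 3 → ℤ) :=
  AddMonoidAlgebra.single (fun _ => (-1 : ℤ)) (-1 : ℂ) *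
    ((1 - X3 2) * (1 - X3 0 - X3 2) * (1 - X3 1 - X3 2) *
      (1 - X3 0 - X3 1 - X3 2))

noncomputable abbrev sg (v : Fin 3 → ℤ) (c : ℂ) : AddMonoidAlgebra ℂ (Fin 3 → ℤ) :=
  AddMonoidAlgebra.single v c

lemma vec3_eq {a b c d e f : ℤ} : (![a,b,c] : Fin 3 → ℤ) = ![d,e,f] ↔ a = d ∧ b = e ∧ c = f := by
  constructor
  · intro h; exact ⟨congrFun h 0, congrFun h 1, congrFun h 2⟩
  · rintro ⟨rfl, rfl, rfl⟩; rfl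

lemma vec3_add (a b c d e f : ℤ) : (![a,b,c] : Fin 3 → ℤ) + ![d,e,f] = ![a+d, b+e, c+f] := by
  funext i; fin_cases i <;> simp

lemma vec3_smul (n : ℕ) (a b c : ℤ) : n • (![a,b,c] : Fin 3 → ℤ) = ![n•a, n•b, n•c] := by
  funext i; fin_cases i <;> simp

lemma vec3_zero : (0 : Fin 3 → ℤ) = ![0,0,0] := by
  funext i; fin_cases i <;> simp

lemma hX0 : X3 0 = sg ![1,0,0] 1 := by
  unfold X3; congr 1; funext i; fin_cases i <;> simp [Pi.single_apply]

lemma hX1 : X3 1 = sg ![0,1,0] 1 := by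
  unfold X3; congr 1; funext i; fin_cases i <;> simp [Pi.single_apply]

lemma hX2 : X3 2 = sg ![0,0,1] 1 := by
  unfold X3; congr 1; funext i; fin_cases i <;> simp [Pi.single_apply]

lemma sg_mul (v w : Fin 3 → ℤ) (c d : ℂ) : sg v c * sg w d = sg (v + w) (c * d) :=
  AddMonoidAlgebra.single_mul_single _ _ _ _

lemma sg_nat (m : ℕ) : ((m : ℕ) : AddMonoidAlgebra ℂ (Fin 3 → ℤ)) = sg 0 (m : ℂ) :=
  (map_natCast (AddMonoidAlgebra.singleZeroRingHom) m).symm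

/-- Expansion of `(1 - x₃)^e` into monomials. -/
lemma upow (e : ℕ) : (1 - X3 2) ^ e =
    ∑ t ∈ Finset.range (e+1), sg ![0,0,(t:ℤ)] ((-1)^t * (e.choose t : ℂ)) := by
  have h : (1 : AddMonoidAlgebra ℂ (Fin 3 → ℤ)) - X3 2 = (-X3 2) + 1 := by ring
  rw [h, add_pow]
  refine Finset.sum_congr rfl fun t _ => ?_
  have hneg : -X3 2 = sg ![0,0,1] (-1) := by
    rw [hX2]; exact (AddMonoidAlgebra.single_neg _ _).symm
  rw [hneg, AddMonoidAlgebra.single_pow, one_pow, mul_one, sg_nat, sg_mul]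
  congr 1
  rw [vec3_smul]; simp

/-- `T p q e c = c·x₁^p x₂^q (1-x₃)^e`, the basic building block. -/
noncomputable def T (p q : ℤ) (e : ℕ) (c : ℂ) : AddMonoidAlgebra ℂ (Fin 3 → ℤ) :=
  sg ![p,q,0] c * (1 - X3 2) ^ e

lemma Tmul (p q p' q' : ℤ) (e e' : ℕ) (c c' : ℂ) :
    T p q e c * T p' q' e' c' = T (p+p') (q+q') (e+e') (c*c') := by
  unfold T
  rw [mul_mul_mul_comm, sg_mul, vec3_add, pow_add]
  norm_num

lemma Tone (e : ℕ) : (1 - X3 2) ^ e = T 0 0 e 1 := by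
  unfold T
  rw [show (![0,0,0] : Fin 3 → ℤ) = 0 from vec3_zero.symm]
  rw [show sg 0 (1:ℂ) = 1 from rfl]
  rw [one_mul]

lemma Teval (p q : ℤ) (e k : ℕ) (c : ℂ) :
    (T p q e c).coeff ![(k:ℤ), (k:ℤ), (k:ℤ)]
      = if p = (k:ℤ) ∧ q = (k:ℤ) then c * ((-1)^k * (e.choose k : ℂ)) else 0 := by
  unfold T
  rw [AddMonoidAlgebra.coeff_single_mul_apply]
  have hv : (-![p,q,0] + ![(k:ℤ),(k:ℤ),(k:ℤ)]) = ![(k:ℤ)-p, (k:ℤ)-q, (k:ℤ)] := by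
    funext i; fin_cases i <;> simp <;> ring
  rw [hv, upow, AddMonoidAlgebra.coeff_sum, Finset.sum_apply']
  by_cases hpq : p = (k:ℤ) ∧ q = (k:ℤ)
  · obtain ⟨h1, h2⟩ := hpq
    rw [h1, h2, sub_self]
    rw [if_pos ⟨rfl, rfl⟩]
    have hterm : ∀ t ∈ Finset.range (e+1),
        (sg ![0,0,(t:ℤ)] ((-1)^t * (e.choose t : ℂ))).coeff ![(0:ℤ), 0, (k:ℤ)]
          = if t = k then ((-1:ℂ)^t * (e.choose t : ℂ)) else 0 := by
      intro t _
      rw [AddMonoidAlgebra.coeff_single, Finsupp.single_apply]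
      refine if_congr ?_ rfl rfl
      rw [vec3_eq]
      constructor
      · rintro ⟨-, -, h⟩; exact_mod_cast h
      · rintro rfl; exact ⟨rfl, rfl, rfl⟩
    rw [Finset.sum_congr rfl hterm, Finset.sum_ite_eq' (Finset.range (e+1)) k]
    by_cases hk : k ∈ Finset.range (e+1)
    · rw [if_pos hk]
    · rw [if_neg hk]
      have : e.choose k = 0 := Nat.choose_eq_zero_of_lt (by simpa using hk)
      rw [this]; simp
  · rw [if_neg hpq]
    have hterm : ∀ t ∈ Finset.range (e+1),
        (sg ![0,0,(t:ℤ)] ((-1)^t * (e.choose t : ℂ))).coeff ![(k:ℤ)-p, (k:ℤ)-q, (k:ℤ)] = 0 := by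
      intro t _
      rw [AddMonoidAlgebra.coeff_single, Finsupp.single_apply, if_neg]
      rw [vec3_eq]
      rintro ⟨h1, h2, -⟩
      exact hpq ⟨by linarith [h1.symm], by linarith [h2.symm]⟩
    rw [Finset.sum_congr rfl hterm, Finset.sum_const_zero, mul_zero]

lemma E1 (n : ℕ) : ((1 - X3 2) - X3 0) ^ n =
    ∑ i ∈ Finset.range (n+1), T i 0 (n-i) ((-1)^i * (n.choose i : ℂ)) := by
  have h : (1 - X3 2) - X3 0 = (-X3 0) + (1 - X3 2) := by ring
  rw [h, add_pow]
  refine Finset.sum_congr rfl fun i _ => ?_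
  have hneg : -X3 0 = sg ![1,0,0] (-1) := by
    rw [hX0]; exact (AddMonoidAlgebra.single_neg _ _).symm
  have hv : i • (![1,0,0] : Fin 3 → ℤ) = ![(i:ℤ),0,0] := by rw [vec3_smul]; simp
  rw [hneg, AddMonoidAlgebra.single_pow, sg_nat, T, hv, mul_right_comm, sg_mul, add_zero]

lemma E2 (n : ℕ) : ((1 - X3 2) - X3 1) ^ n =
    ∑ j ∈ Finset.range (n+1), T 0 j (n-j) ((-1)^j * (n.choose j : ℂ)) := by
  have h : (1 - X3 2) - X3 1 = (-X3 1) + (1 - X3 2) := by ring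
  rw [h, add_pow]
  refine Finset.sum_congr rfl fun j _ => ?_
  have hneg : -X3 1 = sg ![0,1,0] (-1) := by
    rw [hX1]; exact (AddMonoidAlgebra.single_neg _ _).symm
  have hv : j • (![0,1,0] : Fin 3 → ℤ) = ![0,(j:ℤ),0] := by rw [vec3_smul]; simp
  rw [hneg, AddMonoidAlgebra.single_pow, sg_nat, T, hv, mul_right_comm, sg_mul, add_zero]

lemma Tscal (p q : ℤ) (e : ℕ) (c d : ℂ) : T p q e c * sg 0 d = T p q e (c * d) := by
  unfold T
  rw [mul_right_comm, sg_mul, add_zero]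

lemma Tneg1 (b : ℕ) : (-X3 1) ^ b = T 0 b 0 ((-1)^b) := by
  have hneg : -X3 1 = sg ![0,1,0] (-1) := by
    rw [hX1]; exact (AddMonoidAlgebra.single_neg _ _).symm
  have hv : b • (![0,1,0] : Fin 3 → ℤ) = ![0,(b:ℤ),0] := by rw [vec3_smul]; simp
  rw [hneg, AddMonoidAlgebra.single_pow, hv, T, pow_zero, mul_one]

lemma E3 (k : ℕ) : ((1 - X3 2) - X3 0 - X3 1) ^ k =
    ∑ b ∈ Finset.range (k+1), ∑ a ∈ Finset.range (k-b+1),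
      T a b (k-b-a) ((-1)^(a+b) * ((k.choose b : ℂ) * (((k-b).choose a : ℕ) : ℂ))) := by
  have h : (1 - X3 2) - X3 0 - X3 1 = (-X3 1) + ((1 - X3 2) - X3 0) := by ring
  rw [h, add_pow]
  refine Finset.sum_congr rfl fun b _ => ?_
  rw [E1 (k-b), sg_nat, Finset.mul_sum, Finset.sum_mul]
  refine Finset.sum_congr rfl fun a _ => ?_
  rw [Tneg1, Tmul, Tscal, zero_add, add_zero, zero_add]
  congr 1
  rw [pow_add]
  ring

lemma ama_sum_apply {α : Type} (s : Finset α) (f : α → AddMonoidAlgebra ℂ (Fin 3 → ℤ))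
    (v : Fin 3 → ℤ) : (∑ i ∈ s, f i).coeff v = ∑ i ∈ s, (f i).coeff v := by
  rw [AddMonoidAlgebra.coeff_sum, Finset.sum_apply']

lemma collapse2 (k a b : ℕ) (ha : a ≤ k) (hb : b ≤ k) (V : ℕ → ℕ → ℂ) :
    (∑ j ∈ Finset.range (k+1), ∑ i ∈ Finset.range (k+1),
      if ((i:ℤ) + (a:ℤ) = (k:ℤ)) ∧ ((j:ℤ) + (b:ℤ) = (k:ℤ)) then V i j else 0)
    = V (k-a) (k-b) := by
  have hcol : ∀ (W : ℕ → ℂ) (c : ℕ), c ≤ k →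
      (∑ i ∈ Finset.range (k+1), if (i:ℤ) + (c:ℤ) = (k:ℤ) then W i else 0) = W (k-c) := by
    intro W c hc
    have h : ∀ i ∈ Finset.range (k+1),
        (if (i:ℤ)+(c:ℤ)=(k:ℤ) then W i else 0) = if i = k-c then W i else 0 :=
      fun i _ => if_congr (by omega) rfl rfl
    rw [Finset.sum_congr rfl h, Finset.sum_ite_eq' _ (k-c),
      if_pos (Finset.mem_range_succ_iff.mpr (by omega))]
  have hin : ∀ j : ℕ, (∑ i ∈ Finset.range (k+1),
      if ((i:ℤ)+(a:ℤ)=(k:ℤ)) ∧ ((j:ℤ)+(b:ℤ)=(k:ℤ)) then V i j else 0)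
      = if ((j:ℤ)+(b:ℤ)=(k:ℤ)) then V (k-a) j else 0 := by
    intro j
    by_cases hj : ((j:ℤ)+(b:ℤ)=(k:ℤ))
    · simp only [hj, and_true]
      exact hcol (fun i => V i j) a ha
    · rw [Finset.sum_eq_zero fun i _ => if_neg (fun h => hj h.2), if_neg hj]
  rw [Finset.sum_congr rfl (fun j _ => hin j)]
  exact hcol (fun j => V (k-a) j) b hb
lemma Pk (k : ℕ) :
    (((1 - X3 2) * (1 - X3 0 - X3 2) * (1 - X3 1 - X3 2) * (1 - X3 0 - X3 1 - X3 2)) ^ k).coeff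
        ![(k:ℤ), (k:ℤ), (k:ℤ)]
    = ∑ b ∈ Finset.range (k+1), ∑ a ∈ Finset.range (k-b+1),
        (-1:ℂ)^k * (((2*k).choose k * k.choose (k-a) * k.choose (k-b) * k.choose b
          * (k-b).choose a : ℕ) : ℂ) := by
  have hfac : (1 - X3 2) * (1 - X3 0 - X3 2) * (1 - X3 1 - X3 2) * (1 - X3 0 - X3 1 - X3 2)
      = ((1 - X3 2) - X3 0) * ((1 - X3 2) - X3 1) * ((1 - X3 2) - X3 0 - X3 1) * (1 - X3 2) := by
    ring
  rw [hfac, mul_pow, mul_pow, mul_pow, E1 k, E2 k, E3 k, Tone k]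
  simp only [Finset.sum_mul, Finset.mul_sum]
  simp only [Tmul]
  simp only [ama_sum_apply]
  simp only [Teval]
  simp only [add_zero, zero_add, mul_one]
  refine Finset.sum_congr rfl fun b hb => Finset.sum_congr rfl fun a ha => ?_
  have hb' : b ≤ k := Finset.mem_range_succ_iff.mp hb
  have ha' : a ≤ k - b := Finset.mem_range_succ_iff.mp ha
  rw [collapse2 k a b (by omega) hb']
  have hE : (k - (k-a)) + (k - (k-b)) + (k - b - a) + k = 2*k := by omega
  rw [hE]
  have hsign : ((-1:ℂ))^(k-a) * ((-1:ℂ))^(k-b) * ((-1:ℂ))^(a+b) = 1 := by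
    rw [← pow_add, ← pow_add]
    have h2 : (k-a) + (k-b) + (a+b) = 2*k := by omega
    rw [h2, pow_mul]
    norm_num
  trans (((-1:ℂ))^(k-a) * ((-1:ℂ))^(k-b) * ((-1:ℂ))^(a+b) *
      ((-1:ℂ)^k * ((k.choose (k-a) : ℂ) * (k.choose (k-b) : ℂ) *
        ((k.choose b : ℂ) * (((k-b).choose a : ℕ) : ℂ)) * (((2*k).choose k : ℕ) : ℂ))))
  · ring
  · rw [hsign, one_mul]
    push_cast
    ring

set_option maxHeartbeats 1000000 in
lemma mainlemma (k : ℕ) : (phiV10 ^ k).coeff 0 =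
    ∑ i ∈ Finset.range (k + 1), ∑ j ∈ Finset.range (k - i + 1),
      ((k.factorial : ℂ) * ((2 * k).factorial : ℂ)) /
        (((i.factorial : ℂ)) ^ 2 * ((j.factorial : ℂ)) ^ 2 * ((k - i).factorial : ℂ) *
          ((k - j).factorial : ℂ) * ((k - i - j).factorial : ℂ)) := by
  have hphi : phiV10 ^ k = AddMonoidAlgebra.single (k • (fun _ => (-1:ℤ))) ((-1:ℂ)^k) *
      (((1 - X3 2) * (1 - X3 0 - X3 2) * (1 - X3 1 - X3 2) * (1 - X3 0 - X3 1 - X3 2)) ^ k) := by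
    have h0 : phiV10 = AddMonoidAlgebra.single (fun _ => (-1 : ℤ)) (-1 : ℂ) *
        ((1 - X3 2) * (1 - X3 0 - X3 2) * (1 - X3 1 - X3 2) *
          (1 - X3 0 - X3 1 - X3 2)) := rfl
    rw [h0, mul_pow, AddMonoidAlgebra.single_pow]
  rw [hphi, AddMonoidAlgebra.coeff_single_mul_apply]
  have hv : (-(k • (fun _ => (-1:ℤ))) + (0 : Fin 3 → ℤ)) = ![(k:ℤ), (k:ℤ), (k:ℤ)] := by
    funext i; fin_cases i <;> simp
  rw [hv, Pk k, Finset.mul_sum]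
  refine Finset.sum_congr rfl fun b hb => ?_
  rw [Finset.mul_sum]
  refine Finset.sum_congr rfl fun a ha => ?_
  have hb' : b ≤ k := Finset.mem_range_succ_iff.mp hb
  have ha' : a ≤ k - b := Finset.mem_range_succ_iff.mp ha
  have hkk : (-1:ℂ)^k * (-1:ℂ)^k = 1 := by
    rw [← pow_add]; exact Even.neg_one_pow ⟨k, rfl⟩
  rw [← mul_assoc, hkk, one_mul]
  have c1 : (((2*k).choose k : ℕ) : ℂ) = ((2*k).factorial : ℂ) /
      ((k.factorial : ℂ) * (k.factorial : ℂ)) := by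
    rw [Nat.cast_choose ℂ (by omega : k ≤ 2*k), show 2*k - k = k from by omega]
  have c2 : ((k.choose (k-a) : ℕ) : ℂ) = ((k.factorial : ℂ)) /
      (((k-a).factorial : ℂ) * ((a.factorial : ℂ))) := by
    rw [Nat.cast_choose ℂ (by omega : k - a ≤ k), show k - (k-a) = a from by omega]
  have c3 : ((k.choose (k-b) : ℕ) : ℂ) = ((k.factorial : ℂ)) /
      (((k-b).factorial : ℂ) * ((b.factorial : ℂ))) := by
    rw [Nat.cast_choose ℂ (by omega : k - b ≤ k), show k - (k-b) = b from by omega]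
  have c4 : ((k.choose b : ℕ) : ℂ) = ((k.factorial : ℂ)) /
      ((b.factorial : ℂ) * ((k-b).factorial : ℂ)) := by
    rw [Nat.cast_choose ℂ hb']
  have c5 : (((k-b).choose a : ℕ) : ℂ) = (((k-b).factorial : ℂ)) /
      ((a.factorial : ℂ) * ((k-b-a).factorial : ℂ)) := by
    rw [Nat.cast_choose ℂ ha']
  have F : ∀ n : ℕ, ((n.factorial : ℂ)) ≠ 0 := fun n =>
    Nat.cast_ne_zero.mpr n.factorial_ne_zero
  push_cast
  rw [c1, c2, c3, c4, c5]
  rw [div_mul_div_comm, div_mul_div_comm, div_mul_div_comm, div_mul_div_comm]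
  rw [div_eq_div_iff
    (by refine mul_ne_zero (mul_ne_zero (mul_ne_zero (mul_ne_zero ?_ ?_) ?_) ?_) ?_ <;>
      exact mul_ne_zero (F _) (F _))
    (by refine mul_ne_zero (mul_ne_zero (mul_ne_zero (mul_ne_zero ?_ ?_) (F _)) (F _)) (F _) <;>
      exact pow_ne_zero _ (F _))]
  ring

/-- The constant term of `φ^k` equals
`∑_{i=0}^{k} ∑_{j=0}^{k-i} k!(2k)! / (i!² j!² (k-i)! (k-j)! (k-i-j)!)`;
in particular these constant terms are `1, 6, 114` for `k = 0, 1, 2`. -/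
theorem constant_term_phiV10 :
    (∀ k : ℕ, (phiV10 ^ k).coeff 0 =
      ∑ i ∈ Finset.range (k + 1), ∑ j ∈ Finset.range (k - i + 1),
        ((k.factorial : ℂ) * ((2 * k).factorial : ℂ)) /
          (((i.factorial : ℂ)) ^ 2 * ((j.factorial : ℂ)) ^ 2 * ((k - i).factorial : ℂ) *
            ((k - j).factorial : ℂ) * ((k - i - j).factorial : ℂ))) ∧
      (phiV10 ^ 0).coeff 0 = 1 ∧ (phiV10 ^ 1).coeff 0 = 6 ∧ (phiV10 ^ 2).coeff 0 = 114 := by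
  refine ⟨mainlemma, ?_, ?_, ?_⟩
  · rw [mainlemma 0]
    norm_num
  · rw [mainlemma 1]
    norm_num [Finset.sum_range_succ, Finset.sum_range_zero, Nat.factorial]
  · rw [mainlemma 2]
    norm_num [Finset.sum_range_succ, Finset.sum_range_zero, Nat.factorial]
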